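/- arXiv:2305.15163 — 4 statements merged into one kernel-verified Lean document; each statement's English description precedes it below -/
import Mathlib

section
/- Fix a port index j shared by two subdomains i and ℓ. For subdomain i, let Q(i) be a finite index set of ports with j ∈ Q(i), and for each k ∈ Q(i) let P_i^k ∈ ℝ^{N_k^p × N_i^Γ} satisfy P_i^k (P_i^k)ᵀ = I and P_i^k (P_i^m)ᵀ = 0 for k ≠ m in Q(i); let P̂_i^k ∈ ℝ^{n_k^p × n_i^Γ} be arbitrary matrices, let g_k^p : ℝ^{n_k^p} → ℝ^{N_k^p} be arbitrary functions, and define the interface decoder g_i^Γ(x̂) = Σ_{k ∈ Q(i)} (P_i^k)ᵀ g_k^p(P̂_i^k x̂). Make the analogous assumptions and definitions for subdomain ℓ, using the same port function g_j^p for the shared port j. Then: (i) for every x̂ ∈ ℝ^{n_i^Γ} and every k ∈ Q(i), P_i^k g_i^Γ(x̂) = g_k^p(P̂_i^k x̂); and (ii) if the ROM port compatibility condition P̂_i^j x̂_i = P̂_ℓ^j x̂_ℓ holds for x̂_i ∈ ℝ^{n_i^Γ} and x̂_ℓ ∈ ℝ^{n_ℓ^Γ}, then P_i^j g_i^Γ(x̂_i)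 = P_ℓ^j g_ℓ^Γ(x̂_ℓ). -/
open Matrix

lemma aux_port {J : Type*} [DecidableEq J] {Np : J → ℕ} {NΓ : ℕ}
    (Q : Finset J) (P : ∀ j : J, Matrix (Fin (Np j)) (Fin NΓ) ℝ)
    (hP1 : ∀ j ∈ Q, P j * (P j)ᵀ = 1)
    (hP0 : ∀ j ∈ Q, ∀ k ∈ Q, j ≠ k → P j * (P k)ᵀ = 0)
    (v : ∀ j : J, Fin (Np j) → ℝ) (k : J) (hk : k ∈ Q) :
    (P k).mulVec (∑ j ∈ Q, (P j)ᵀ.mulVec (v j)) = v k := by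
  simp only [← Matrix.mulVecLin_apply, map_sum]
  rw [Finset.sum_eq_single_of_mem k hk]
  · simp only [Matrix.mulVecLin_apply, Matrix.mulVec_mulVec, hP1 k hk, Matrix.one_mulVec]
  · intro j hj hjk
    simp only [Matrix.mulVecLin_apply, Matrix.mulVec_mulVec, hP0 k hk j hj (Ne.symm hjk), Matrix.zero_mulVec]

/-- Port decoders and the implied interface decoders: ROM port compatibility
implies strong compatibility on the FOM ports (Section 3.2 of the paper). -/
theorem stmt_5 (J : Type*) [DecidableEq J] (Np np : J → ℕ)
    (gp : ∀ j : J, (Fin (np j) → ℝ) → (Fin (Np j) → ℝ))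
    (NΓi NΓl nΓi nΓl : ℕ)
    (Qi Ql : Finset J) (j₀ : J) (hj₀i : j₀ ∈ Qi) (hj₀l : j₀ ∈ Ql)
    (Pi : ∀ j : J, Matrix (Fin (Np j)) (Fin NΓi) ℝ)
    (Pl : ∀ j : J, Matrix (Fin (Np j)) (Fin NΓl) ℝ)
    (Phati : ∀ j : J, Matrix (Fin (np j)) (Fin nΓi) ℝ)
    (Phatl : ∀ j : J, Matrix (Fin (np j)) (Fin nΓl) ℝ)
    (hPii : ∀ j ∈ Qi, Pi j * (Pi j)ᵀ = 1)
    (hPio : ∀ j ∈ Qi, ∀ k ∈ Qi, j ≠ k → Pi j * (Pi k)ᵀ = 0)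
    (hPll : ∀ j ∈ Ql, Pl j * (Pl j)ᵀ = 1)
    (hPlo : ∀ j ∈ Ql, ∀ k ∈ Ql, j ≠ k → Pl j * (Pl k)ᵀ = 0)
    (gΓi : (Fin nΓi → ℝ) → (Fin NΓi → ℝ))
    (hgΓi : gΓi = fun x => ∑ j ∈ Qi, (Pi j)ᵀ.mulVec (gp j ((Phati j).mulVec x)))
    (gΓl : (Fin nΓl → ℝ) → (Fin NΓl → ℝ))
    (hgΓl : gΓl = fun x => ∑ j ∈ Ql, (Pl j)ᵀ.mulVec (gp j ((Phatl j).mulVec x))) :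
    (∀ x : Fin nΓi → ℝ, ∀ k ∈ Qi,
      (Pi k).mulVec (gΓi x) = gp k ((Phati k).mulVec x)) ∧
    (∀ (xi : Fin nΓi → ℝ) (xl : Fin nΓl → ℝ),
      (Phati j₀).mulVec xi = (Phatl j₀).mulVec xl →
      (Pi j₀).mulVec (gΓi xi) = (Pl j₀).mulVec (gΓl xl)) := by
  subst hgΓi hgΓl
  constructor
  · intro x k hk
    exact aux_port Qi Pi hPii hPio _ k hk
  · intro xi xl h
    rw [aux_port Qi Pi hPii hPio _ j₀ hj₀i, aux_port Ql Pl hPll hPlo _ j₀ hj₀l, h]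
end

section
/- Let F : ℝ^n → ℝ^n be continuously differentiable, let z̄ ∈ ℝ^n satisfy F(z̄) = 0 with DF(z̄) invertible, and assume the Jacobian is Lipschitz continuous with constant K > 0: ‖DF(y) − DF(z)‖ ≤ K ‖y − z‖ for all y, z (operator norm). Set κ̄ = ‖DF(z̄)⁻¹‖ · ‖DF(z̄)‖. Let (η_k) be a sequence with 0 < η_k ≤ η for all k, where 4 η κ̄ < 1, and let σ ∈ (4 η κ̄, 1). Then there exists ε > 0 such that for every sequence (z_k) with ‖z_0 − z̄‖ < ε and z_{k+1} = z_k + s_k, where each step s_k satisfies the inexact Newton condition ‖F(z_k) + DF(z_k) s_k‖ ≤ η_k ‖F(z_k)‖, the sequence (z_k) converges to z̄ and satisfies, for every k, ‖z_{k+1} − z̄‖ ≤ K ‖DF(z̄)⁻¹‖ ‖z_k − z̄‖² + 4 η_k κ̄ ‖z_k − z̄‖ ≤ σ ‖z_k − z̄‖. -/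
set_option maxHeartbeats 1000000
set_option synthInstance.maxHeartbeats 200000

open Filter Topology Set

lemma taylor_quad {E : Type*} [NormedAddCommGroup E] [NormedSpace ℝ E]
    (F : E → E) (hF : Differentiable ℝ F) (K : ℝ)
    (hLip : ∀ y z : E, ‖fderiv ℝ F y - fderiv ℝ F z‖ ≤ K * ‖y - z‖)
    (x y : E) :
    ‖F y - F x - fderiv ℝ F x (y - x)‖ ≤ K / 2 * ‖y - x‖ ^ 2 := by
  set v := y - x with hv
  set g : ℝ → E := fun t => F (x + t • v) - F x - t • (fderiv ℝ F x v) with hg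
  have hline : ∀ t : ℝ, HasDerivAt (fun t : ℝ => x + t • v) v t := by
    intro t
    simpa using ((hasDerivAt_id t).smul_const v).const_add x
  have hg' : ∀ t : ℝ, HasDerivAt g (fderiv ℝ F (x + t • v) v - fderiv ℝ F x v) t := by
    intro t
    have h1 : HasDerivAt (fun t : ℝ => F (x + t • v)) (fderiv ℝ F (x + t • v) v) t :=
      (hF (x + t • v)).hasFDerivAt.comp_hasDerivAt t (hline t)
    have h2 : HasDerivAt (fun t : ℝ => t • (fderiv ℝ F x v)) (fderiv ℝ F x v) t := by
      simpa using (hasDerivAt_id t).smul_const (fderiv ℝ F x v)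
    exact (h1.sub_const (F x)).sub h2
  have hcont : ContinuousOn g (Icc (0:ℝ) 1) :=
    fun t _ => ((hg' t).continuousAt).continuousWithinAt
  have hderiv : ∀ t ∈ Ico (0:ℝ) 1,
      HasDerivWithinAt g (fderiv ℝ F (x + t • v) v - fderiv ℝ F x v) (Ici t) t :=
    fun t _ => (hg' t).hasDerivWithinAt
  have ha : ‖g 0‖ ≤ K * ‖v‖ ^ 2 * ((0:ℝ) ^ 2 / 2) := by simp [hg]
  have hB : ∀ t : ℝ, HasDerivAt (fun t => K * ‖v‖ ^ 2 * (t ^ 2 / 2)) (K * ‖v‖ ^ 2 * t) t := by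
    intro t
    have : HasDerivAt (fun t : ℝ => t ^ 2 / 2) t t := by
      simpa using ((hasDerivAt_pow 2 t).div_const 2)
    exact this.const_mul (K * ‖v‖ ^ 2)
  have bound : ∀ t ∈ Ico (0:ℝ) 1,
      ‖fderiv ℝ F (x + t • v) v - fderiv ℝ F x v‖ ≤ K * ‖v‖ ^ 2 * t := by
    intro t ht
    have h1 : ‖fderiv ℝ F (x + t • v) v - fderiv ℝ F x v‖
        ≤ ‖fderiv ℝ F (x + t • v) - fderiv ℝ F x‖ * ‖v‖ := by
      simpa using (fderiv ℝ F (x + t • v) - fderiv ℝ F x).le_opNorm v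
    have h2 : ‖fderiv ℝ F (x + t • v) - fderiv ℝ F x‖ ≤ K * (t * ‖v‖) := by
      have := hLip (x + t • v) x
      simpa [norm_smul, abs_of_nonneg ht.1] using this
    calc ‖fderiv ℝ F (x + t • v) v - fderiv ℝ F x v‖
        ≤ K * (t * ‖v‖) * ‖v‖ := h1.trans (by
          apply mul_le_mul_of_nonneg_right h2 (norm_nonneg v))
      _ = K * ‖v‖ ^ 2 * t := by ring
  have key := image_norm_le_of_norm_deriv_right_le_deriv_boundary hcont hderiv ha hB bound
  have h1 := key (Set.right_mem_Icc.2 (by norm_num : (0:ℝ) ≤ 1))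
  have : g 1 = F y - F x - fderiv ℝ F x v := by simp [hg, hv]
  rw [this] at h1
  calc ‖F y - F x - fderiv ℝ F x v‖ ≤ K * ‖v‖ ^ 2 * ((1:ℝ) ^ 2 / 2) := h1
    _ = K / 2 * ‖v‖ ^ 2 := by ring


private lemma arith1 (β K ηk nA Y X Fn : ℝ) (hβ : 0 < β) (hηk : 0 ≤ ηk)
    (hY0 : 0 ≤ Y) (hX0 : 0 ≤ X) (hFn : Fn ≤ 2 * nA * Y)
    (hmain : X ≤ β * ((ηk * Fn + K / 2 * Y ^ 2) + K * Y * X))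
    (hhalf : β * K * Y ≤ 1 / 2) :
    X ≤ K * β * Y ^ 2 + 4 * ηk * (β * nA) * Y := by
  nlinarith [mul_le_mul_of_nonneg_right hhalf hX0,
    mul_le_mul_of_nonneg_left hFn (mul_nonneg hβ.le hηk)]

private lemma arith2 (β K ηk ηb κ σ Y ε : ℝ) (hY0 : 0 ≤ Y) (hY : Y ≤ ε)
    (hβ : 0 < β) (hK : 0 < K) (h1 : ε * (β * K) ≤ σ - 4 * ηb * κ)
    (hκ0 : 0 ≤ κ) (hηkb : ηk ≤ ηb) :
    K * β * Y ^ 2 + 4 * ηk * κ * Y ≤ σ * Y := by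
  have h2 : K * β * Y ≤ K * β * ε :=
    mul_le_mul_of_nonneg_left hY (by positivity)
  nlinarith [mul_le_mul_of_nonneg_right h2 hY0,
    mul_le_mul_of_nonneg_right hηkb (by positivity : (0:ℝ) ≤ 4 * κ * Y)]

/-- Local convergence of the inexact Newton method applied to the KKT system
(Theorem 4.3 of the paper). -/
theorem stmt_8 (n : ℕ)
    (F : EuclideanSpace ℝ (Fin n) → EuclideanSpace ℝ (Fin n))
    (hF : ContDiff ℝ 1 F)
    (zbar : EuclideanSpace ℝ (Fin n)) (hzbar : F zbar = 0)
    (A : EuclideanSpace ℝ (Fin n) ≃L[ℝ] EuclideanSpace ℝ (Fin n))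
    (hA : (A : EuclideanSpace ℝ (Fin n) →L[ℝ] EuclideanSpace ℝ (Fin n)) = fderiv ℝ F zbar)
    (K : ℝ) (hK : 0 < K)
    (hLip : ∀ y z : EuclideanSpace ℝ (Fin n),
      ‖fderiv ℝ F y - fderiv ℝ F z‖ ≤ K * ‖y - z‖)
    (κ : ℝ)
    (hκ : κ = ‖(A.symm : EuclideanSpace ℝ (Fin n) →L[ℝ] EuclideanSpace ℝ (Fin n))‖ *
      ‖fderiv ℝ F zbar‖)
    (η : ℕ → ℝ) (ηb : ℝ) (hη : ∀ k, 0 < η k ∧ η k ≤ ηb)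
    (hηb : 4 * ηb * κ < 1)
    (σ : ℝ) (hσ : σ ∈ Set.Ioo (4 * ηb * κ) 1) :
    ∃ ε > 0, ∀ z s : ℕ → EuclideanSpace ℝ (Fin n),
      ‖z 0 - zbar‖ < ε →
      (∀ k, z (k + 1) = z k + s k) →
      (∀ k, ‖F (z k) + fderiv ℝ F (z k) (s k)‖ ≤ η k * ‖F (z k)‖) →
      Tendsto z atTop (𝓝 zbar) ∧
      ∀ k,
        ‖z (k + 1) - zbar‖ ≤
          K * ‖(A.symm : EuclideanSpace ℝ (Fin n) →L[ℝ] EuclideanSpace ℝ (Fin n))‖ *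
              ‖z k - zbar‖ ^ 2 + 4 * η k * κ * ‖z k - zbar‖ ∧
        K * ‖(A.symm : EuclideanSpace ℝ (Fin n) →L[ℝ] EuclideanSpace ℝ (Fin n))‖ *
              ‖z k - zbar‖ ^ 2 + 4 * η k * κ * ‖z k - zbar‖ ≤ σ * ‖z k - zbar‖ := by
  rcases subsingleton_or_nontrivial (EuclideanSpace ℝ (Fin n)) with hsub | hnt
  · -- trivial case: the space is a single point
    refine ⟨1, one_pos, fun z s h0 hz hs => ?_⟩
    have hz0 : ∀ k, z k = zbar := fun k => Subsingleton.elim _ _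
    constructor
    · have : z = fun _ => zbar := funext hz0
      rw [this]; exact tendsto_const_nhds
    · intro k
      have h1 : z (k + 1) - zbar = 0 := by rw [hz0]; exact sub_self _
      have h2 : z k - zbar = 0 := by rw [hz0]; exact sub_self _
      rw [h1, h2, norm_zero]
      norm_num
  · -- main case
    obtain ⟨β, hβdef⟩ : ∃ b : ℝ,
        b = ‖(A.symm : EuclideanSpace ℝ (Fin n) →L[ℝ] EuclideanSpace ℝ (Fin n))‖ := ⟨_, rfl⟩
    rw [← hβdef] at hκ ⊢
    have hβA : 1 ≤ β * ‖(A : EuclideanSpace ℝ (Fin n) →L[ℝ] EuclideanSpace ℝ (Fin n))‖ := by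
      have hid : ((A.symm : EuclideanSpace ℝ (Fin n) →L[ℝ] EuclideanSpace ℝ (Fin n)).comp (A : EuclideanSpace ℝ (Fin n) →L[ℝ] EuclideanSpace ℝ (Fin n))) = ContinuousLinearMap.id ℝ (EuclideanSpace ℝ (Fin n)) := by
        ext x; simp
      have h := ContinuousLinearMap.opNorm_comp_le (A.symm : EuclideanSpace ℝ (Fin n) →L[ℝ] EuclideanSpace ℝ (Fin n)) (A : EuclideanSpace ℝ (Fin n) →L[ℝ] EuclideanSpace ℝ (Fin n))
      rw [hid, ContinuousLinearMap.norm_id] at h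
      rw [hβdef]
      exact h
    have hβ : 0 < β := by rw [hβdef] at *; nlinarith [norm_nonneg (A : EuclideanSpace ℝ (Fin n) →L[ℝ] EuclideanSpace ℝ (Fin n)), norm_nonneg (A.symm : EuclideanSpace ℝ (Fin n) →L[ℝ] EuclideanSpace ℝ (Fin n))]
    have hAn : 0 < ‖(A : EuclideanSpace ℝ (Fin n) →L[ℝ] EuclideanSpace ℝ (Fin n))‖ := by nlinarith [norm_nonneg (A.symm : EuclideanSpace ℝ (Fin n) →L[ℝ] EuclideanSpace ℝ (Fin n))]
    have hκβ : κ = β * ‖(A : EuclideanSpace ℝ (Fin n) →L[ℝ] EuclideanSpace ℝ (Fin n))‖ := by rw [hκ, ← hA]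
    have hκ1 : 1 ≤ κ := hκβ ▸ hβA
    have hηb0 : 0 < ηb := lt_of_lt_of_le (hη 0).1 (hη 0).2
    have hσ0 : 0 < σ := lt_of_le_of_lt (by positivity) hσ.1
    have hσ1 : σ < 1 := hσ.2
    have hσκ : 4 * ηb * κ < σ := hσ.1
    have hlow : ∀ v : EuclideanSpace ℝ (Fin n), ‖v‖ ≤ β * ‖(A : EuclideanSpace ℝ (Fin n) →L[ℝ] EuclideanSpace ℝ (Fin n)) v‖ := by
      intro v
      calc ‖v‖ = ‖(A.symm : EuclideanSpace ℝ (Fin n) →L[ℝ] EuclideanSpace ℝ (Fin n)) ((A : EuclideanSpace ℝ (Fin n) →L[ℝ] EuclideanSpace ℝ (Fin n)) v)‖ := by simp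
        _ ≤ β * ‖(A : EuclideanSpace ℝ (Fin n) →L[ℝ] EuclideanSpace ℝ (Fin n)) v‖ := by
            rw [hβdef]
            exact (A.symm : EuclideanSpace ℝ (Fin n) →L[ℝ] EuclideanSpace ℝ (Fin n)).le_opNorm _
    have hT := taylor_quad F (hF.differentiable one_ne_zero) K hLip
    obtain ⟨ε, hεdef⟩ : ∃ e : ℝ, e = min (min (1 / (2 * β * K))
        (‖(A : EuclideanSpace ℝ (Fin n) →L[ℝ] EuclideanSpace ℝ (Fin n))‖ / K))
        ((σ - 4 * ηb * κ) / (β * K)) := ⟨_, rfl⟩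
    have hε0 : 0 < ε := by
      rw [hεdef]
      apply lt_min (lt_min (by positivity) (by positivity))
      have : 0 < σ - 4 * ηb * κ := by linarith
      positivity
    have hεa : ε ≤ 1 / (2 * β * K) := hεdef ▸ le_trans (min_le_left _ _) (min_le_left _ _)
    have hεb : ε ≤ ‖(A : EuclideanSpace ℝ (Fin n) →L[ℝ] EuclideanSpace ℝ (Fin n))‖ / K :=
      hεdef ▸ le_trans (min_le_left _ _) (min_le_right _ _)
    have hεc : ε ≤ (σ - 4 * ηb * κ) / (β * K) := hεdef ▸ min_le_right _ _
    -- one-step estimate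
    have step : ∀ (k : ℕ) (z' s' : EuclideanSpace ℝ (Fin n)), ‖z' - zbar‖ < ε →
        ‖F z' + fderiv ℝ F z' s'‖ ≤ η k * ‖F z'‖ →
        ‖z' + s' - zbar‖ ≤ K * β * ‖z' - zbar‖ ^ 2 + 4 * η k * κ * ‖z' - zbar‖ ∧
        K * β * ‖z' - zbar‖ ^ 2 + 4 * η k * κ * ‖z' - zbar‖ ≤ σ * ‖z' - zbar‖ := by
      intro k z' s' he hs
      obtain ⟨e, hedef⟩ : ∃ e : EuclideanSpace ℝ (Fin n), e = z' - zbar := ⟨_, rfl⟩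
      rw [← hedef] at he ⊢
      have hY : ‖e‖ ≤ ε := he.le
      have hY0 : (0:ℝ) ≤ ‖e‖ := norm_nonneg e
      have hηk0 : 0 < η k := (hη k).1
      have hηkb : η k ≤ ηb := (hη k).2
      -- Taylor at zbar
      have hT1 : ‖F z' - (A : EuclideanSpace ℝ (Fin n) →L[ℝ] EuclideanSpace ℝ (Fin n)) e‖ ≤ K / 2 * ‖e‖ ^ 2 := by
        have := hT zbar z'
        rw [hzbar, ← hA] at this
        simpa [hedef] using this
      -- Taylor at z'
      have hT2 : ‖fderiv ℝ F z' e - F z'‖ ≤ K / 2 * ‖e‖ ^ 2 := by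
        have := hT z' zbar
        rw [hzbar] at this
        have h0 : zbar - z' = -e := by simp [hedef]
        rw [h0] at this
        have h1 : (0:EuclideanSpace ℝ (Fin n)) - F z' - (fderiv ℝ F z') (-e) = fderiv ℝ F z' e - F z' := by
          rw [map_neg]; abel
        rw [h1] at this
        simpa [norm_neg] using this
      -- bound on ‖F z'‖
      have hFA : ‖F z'‖ ≤ ‖(A : EuclideanSpace ℝ (Fin n) →L[ℝ] EuclideanSpace ℝ (Fin n))‖ * ‖e‖ + K / 2 * ‖e‖ ^ 2 := by
        have h1 : ‖F z'‖ ≤ ‖(A : EuclideanSpace ℝ (Fin n) →L[ℝ] EuclideanSpace ℝ (Fin n)) e‖ + ‖F z' - (A : EuclideanSpace ℝ (Fin n) →L[ℝ] EuclideanSpace ℝ (Fin n)) e‖ := by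
          have := norm_add_le ((A : EuclideanSpace ℝ (Fin n) →L[ℝ] EuclideanSpace ℝ (Fin n)) e) (F z' - (A : EuclideanSpace ℝ (Fin n) →L[ℝ] EuclideanSpace ℝ (Fin n)) e)
          simpa using this
        have h2 := (A : EuclideanSpace ℝ (Fin n) →L[ℝ] EuclideanSpace ℝ (Fin n)).le_opNorm e
        linarith
      have hKe : K / 2 * ‖e‖ ≤ ‖(A : EuclideanSpace ℝ (Fin n) →L[ℝ] EuclideanSpace ℝ (Fin n))‖ := by
        have h1 : ε * K ≤ ‖(A : EuclideanSpace ℝ (Fin n) →L[ℝ] EuclideanSpace ℝ (Fin n))‖ := by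
          rw [← le_div_iff₀ hK]; exact hεb
        nlinarith
      have hFz : ‖F z'‖ ≤ 2 * ‖(A : EuclideanSpace ℝ (Fin n) →L[ℝ] EuclideanSpace ℝ (Fin n))‖ * ‖e‖ := by nlinarith [sq_nonneg ‖e‖]
      -- bound on derivative applied to new error
      have hDe : ‖fderiv ℝ F z' (e + s')‖ ≤ η k * ‖F z'‖ + K / 2 * ‖e‖ ^ 2 := by
        have hsplit : fderiv ℝ F z' (e + s') =
            (F z' + fderiv ℝ F z' s') + (fderiv ℝ F z' e - F z') := by
          rw [map_add]; abel
        rw [hsplit]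
        exact (norm_add_le _ _).trans (add_le_add hs hT2)
      -- A applied to new error
      obtain ⟨e', he'def⟩ : ∃ x : EuclideanSpace ℝ (Fin n), x = z' + s' - zbar := ⟨_, rfl⟩
      have he'e : e' = e + s' := by rw [he'def, hedef]; abel
      have hAe' : ‖(A : EuclideanSpace ℝ (Fin n) →L[ℝ] EuclideanSpace ℝ (Fin n)) e'‖ ≤ ‖fderiv ℝ F z' e'‖ + K * ‖e‖ * ‖e'‖ := by
        have hsplit : (A : EuclideanSpace ℝ (Fin n) →L[ℝ] EuclideanSpace ℝ (Fin n)) e' =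
            fderiv ℝ F z' e' + ((A : EuclideanSpace ℝ (Fin n) →L[ℝ] EuclideanSpace ℝ (Fin n)) - fderiv ℝ F z') e' := by
          simp
        rw [hsplit]
        refine (norm_add_le _ _).trans (add_le_add_right ?_ _)
        have h1 : ‖((A : EuclideanSpace ℝ (Fin n) →L[ℝ] EuclideanSpace ℝ (Fin n)) - fderiv ℝ F z')‖ ≤ K * ‖e‖ := by
          rw [hA]
          have := hLip zbar z'
          rwa [norm_sub_rev zbar z', ← hedef] at this
        calc ‖((A : EuclideanSpace ℝ (Fin n) →L[ℝ] EuclideanSpace ℝ (Fin n)) - fderiv ℝ F z') e'‖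
            ≤ ‖((A : EuclideanSpace ℝ (Fin n) →L[ℝ] EuclideanSpace ℝ (Fin n)) - fderiv ℝ F z')‖ * ‖e'‖ :=
              ((A : EuclideanSpace ℝ (Fin n) →L[ℝ] EuclideanSpace ℝ (Fin n)) - fderiv ℝ F z').le_opNorm e'
          _ ≤ K * ‖e‖ * ‖e'‖ := mul_le_mul_of_nonneg_right h1 (norm_nonneg e')
      have hmain : ‖e'‖ ≤ β * ((η k * ‖F z'‖ + K / 2 * ‖e‖ ^ 2) + K * ‖e‖ * ‖e'‖) := by
        have h2 : ‖(A : EuclideanSpace ℝ (Fin n) →L[ℝ] EuclideanSpace ℝ (Fin n)) e'‖ ≤ (η k * ‖F z'‖ + K / 2 * ‖e‖ ^ 2) + K * ‖e‖ * ‖e'‖ := by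
          have := hDe
          rw [← he'e] at this
          linarith [hAe']
        exact (hlow e').trans (mul_le_mul_of_nonneg_left h2 hβ.le)
      have hhalf : β * K * ‖e‖ ≤ 1 / 2 := by
        have h1 : ε * (2 * β * K) ≤ 1 := by
          rw [← le_div_iff₀ (by positivity)]; exact hεa
        nlinarith
      have he'X : ‖e'‖ ≤ K * β * ‖e‖ ^ 2 + 4 * η k * κ * ‖e‖ := by
        rw [hκβ]
        exact arith1 β K (η k) ‖(A : EuclideanSpace ℝ (Fin n) →L[ℝ] EuclideanSpace ℝ (Fin n))‖
          ‖e‖ ‖e'‖ ‖F z'‖ hβ hηk0.le hY0 (norm_nonneg e') hFz hmain hhalf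
      have hcontract : K * β * ‖e‖ ^ 2 + 4 * η k * κ * ‖e‖ ≤ σ * ‖e‖ := by
        have h1 : ε * (β * K) ≤ σ - 4 * ηb * κ := by
          rw [← le_div_iff₀ (by positivity)]; exact hεc
        have hκ0 : (0:ℝ) ≤ κ := by linarith
        exact arith2 β K (η k) ηb κ σ ‖e‖ ε hY0 hY hβ hK h1 hκ0 hηkb
      exact ⟨by rw [he'def] at he'X; exact he'X, hcontract⟩
    refine ⟨ε, hε0, fun z s h0 hz hs => ?_⟩
    have hinv : ∀ k, ‖z k - zbar‖ < ε ∧ ‖z k - zbar‖ ≤ σ ^ k * ‖z 0 - zbar‖ := by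
      intro k
      induction k with
      | zero => exact ⟨h0, by simp⟩
      | succ k ih =>
        have hstep := step k (z k) (s k) ih.1 (hs k)
        rw [← hz k] at hstep
        have hb : ‖z (k + 1) - zbar‖ ≤ σ * ‖z k - zbar‖ := hstep.1.trans hstep.2
        constructor
        · have h1 : σ * ‖z k - zbar‖ ≤ ‖z k - zbar‖ := by
            nlinarith [norm_nonneg (z k - zbar)]
          linarith [ih.1]
        · calc ‖z (k + 1) - zbar‖ ≤ σ * ‖z k - zbar‖ := hb
            _ ≤ σ * (σ ^ k * ‖z 0 - zbar‖) := mul_le_mul_of_nonneg_left ih.2 hσ0.le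
            _ = σ ^ (k + 1) * ‖z 0 - zbar‖ := by ring
    constructor
    · rw [tendsto_iff_norm_sub_tendsto_zero]
      apply squeeze_zero (fun k => norm_nonneg _) (fun k => (hinv k).2)
      have h1 : Tendsto (fun k : ℕ => σ ^ k) atTop (𝓝 0) :=
        tendsto_pow_atTop_nhds_zero_of_lt_one hσ0.le hσ1
      simpa using h1.mul_const ‖z 0 - zbar‖
    · intro k
      have hstep := step k (z k) (s k) (hinv k).1 (hs k)
      rw [← hz k] at hstep
      exact ⟨hstep.1, hstep.2⟩
end

section
/- For i = 1, …, nΩ let r_i : ℝ^{N_i} → ℝ^{N_i^r} be functions, B_i ∈ ℝ^{N_i^B × N_i^r} matrices, and g_i : ℝ^{n_i} → ℝ^{N_i} maps. Equip the product space Π_i ℝ^{N_i} with the norm ‖y‖ = (Σ_i ‖y_i‖₂²)^{1/2}, let S ⊆ Π_i ℝ^{n_i} be a set, and write g(ŵ) = (g_1(ŵ_1), …, g_{nΩ}(ŵ_{nΩ})). Let x* = (x*_1, …, x*_{nΩ}) satisfy r_i(x*_i) = 0 for all i, and let x̂* ∈ S. Assume: (a) there exists κ_ℓ > 0 such that (Σ_i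 ‖r_i(y_i) − r_i(z_i)‖₂²)^{1/2} ≥ κ_ℓ ‖y − z‖ for all y, z ∈ Π_i ℝ^{N_i}; and (b) there exists P > 0 such that (Σ_i ‖B_i r_i(y_i)‖₂²)^{1/2} ≥ P (Σ_i ‖r_i(y_i)‖₂²)^{1/2} for all y ∈ g(S). Then ‖x* − g(x̂*)‖ ≤ (1/(P κ_ℓ)) · (Σ_i ‖B_i r_i(g_i(x̂*_i))‖₂²)^{1/2}. -/
open Matrix

/-- A posteriori error bound for the DD-LSPG-ROM (Theorem 6.1 of the paper). -/
theorem stmt_9 (nΩ : ℕ) (N Nr NB nred : Fin nΩ → ℕ)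
    (r : ∀ i : Fin nΩ, (Fin (N i) → ℝ) → (Fin (Nr i) → ℝ))
    (B : ∀ i : Fin nΩ, Matrix (Fin (NB i)) (Fin (Nr i)) ℝ)
    (g : ∀ i : Fin nΩ, (Fin (nred i) → ℝ) → (Fin (N i) → ℝ))
    (S : Set (∀ i : Fin nΩ, Fin (nred i) → ℝ))
    (xstar : ∀ i : Fin nΩ, Fin (N i) → ℝ)
    (hxstar : ∀ i, r i (xstar i) = 0)
    (xhat : ∀ i : Fin nΩ, Fin (nred i) → ℝ) (hxhat : xhat ∈ S)
    (κℓ : ℝ) (hκℓ : 0 < κℓ)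
    (ha : ∀ y z : ∀ i : Fin nΩ, Fin (N i) → ℝ,
      Real.sqrt (∑ i, ∑ j, (r i (y i) j - r i (z i) j) ^ 2) ≥
        κℓ * Real.sqrt (∑ i, ∑ j, (y i j - z i j) ^ 2))
    (P : ℝ) (hP : 0 < P)
    (hb : ∀ w ∈ S,
      Real.sqrt (∑ i, ∑ j, ((B i).mulVec (r i (g i (w i))) j) ^ 2) ≥
        P * Real.sqrt (∑ i, ∑ j, (r i (g i (w i)) j) ^ 2)) :
    Real.sqrt (∑ i, ∑ j, (xstar i j - g i (xhat i) j) ^ 2) ≤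
      (1 / (P * κℓ)) *
        Real.sqrt (∑ i, ∑ j, ((B i).mulVec (r i (g i (xhat i))) j) ^ 2) := by
  have h1 := ha xstar (fun i => g i (xhat i))
  have h2 := hb xhat hxhat
  have heq : Real.sqrt (∑ i, ∑ j, (r i (xstar i) j - r i (g i (xhat i)) j) ^ 2)
      = Real.sqrt (∑ i, ∑ j, (r i (g i (xhat i)) j) ^ 2) := by
    congr 1
    refine Finset.sum_congr rfl fun i _ => Finset.sum_congr rfl fun j _ => ?_
    rw [hxstar i, Pi.zero_apply]
    ring
  rw [heq] at h1
  have hPκ : 0 < P * κℓ := mul_pos hP hκℓ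
  rw [ge_iff_le] at h1
  rw [one_div, mul_comm (P * κℓ)⁻¹, ← div_eq_mul_inv, le_div_iff₀ hPκ]
  calc Real.sqrt (∑ i, ∑ j, (xstar i j - g i (xhat i) j) ^ 2) * (P * κℓ)
      = P * (κℓ * Real.sqrt (∑ i, ∑ j, (xstar i j - g i (xhat i) j) ^ 2)) := by ring
    _ ≤ P * Real.sqrt (∑ i, ∑ j, (r i (g i (xhat i)) j) ^ 2) := by
        exact mul_le_mul_of_nonneg_left h1 hP.le
    _ ≤ _ := h2
end

section
/- For i = 1, …, nΩ let r_i : ℝ^{N_i} → ℝ^{N_i^r} be functions, B_i ∈ ℝ^{N_i^B × N_i^r} matrices, and g_i : ℝ^{n_i} → ℝ^{N_i} maps. Equip the product space Π_i ℝ^{N_i} with the norm ‖y‖ = (Σ_i ‖y_i‖₂²)^{1/2}, let S ⊆ Π_i ℝ^{n_i} be a set, and write g(ŵ) = (g_1(ŵ_1), …, g_{nΩ}(ŵ_{nΩ})). Let x* satisfy r_i(x*_i) = 0 for all i, and let x̂* ∈ S be a global minimizer of J(ŵ) = Σ_i ‖B_i r_i(g_i(ŵ_i))‖₂² over S. Assume: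 (a) there exists κ_ℓ > 0 such that (Σ_i ‖r_i(y_i) − r_i(z_i)‖₂²)^{1/2} ≥ κ_ℓ ‖y − z‖ for all y, z; (b) there exists P > 0 such that (Σ_i ‖B_i r_i(y_i)‖₂²)^{1/2} ≥ P (Σ_i ‖r_i(y_i)‖₂²)^{1/2} for all y ∈ g(S); and (c) there exists κ_u > 0 such that (Σ_i ‖B_i r_i(y_i) − B_i r_i(z_i)‖₂²)^{1/2} ≤ κ_u ‖y − z‖ for all y, z. Then for every ŵ ∈ S, ‖x* − g(x̂*)‖ ≤ (κ_u/(P κ_ℓ)) ‖x* − g(ŵ)‖; equivalently, ‖x* − g(x̂*)‖ ≤ (κ_u/(P κ_ℓ)) inf_{ŵ ∈ S} ‖x* − g(ŵ)‖. -/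
open Matrix

/-- A priori error bound for the DD-LSPG-ROM (Theorem 6.2 of the paper). -/
theorem stmt_10 (nΩ : ℕ) (N Nr NB nred : Fin nΩ → ℕ)
    (r : ∀ i : Fin nΩ, (Fin (N i) → ℝ) → (Fin (Nr i) → ℝ))
    (B : ∀ i : Fin nΩ, Matrix (Fin (NB i)) (Fin (Nr i)) ℝ)
    (g : ∀ i : Fin nΩ, (Fin (nred i) → ℝ) → (Fin (N i) → ℝ))
    (S : Set (∀ i : Fin nΩ, Fin (nred i) → ℝ))
    (xstar : ∀ i : Fin nΩ, Fin (N i) → ℝ)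
    (hxstar : ∀ i, r i (xstar i) = 0)
    (xhat : ∀ i : Fin nΩ, Fin (nred i) → ℝ) (hxhat : xhat ∈ S)
    (hmin : ∀ w ∈ S,
      ∑ i, ∑ j, ((B i).mulVec (r i (g i (xhat i))) j) ^ 2 ≤
        ∑ i, ∑ j, ((B i).mulVec (r i (g i (w i))) j) ^ 2)
    (κℓ : ℝ) (hκℓ : 0 < κℓ)
    (ha : ∀ y z : ∀ i : Fin nΩ, Fin (N i) → ℝ,
      Real.sqrt (∑ i, ∑ j, (r i (y i) j - r i (z i) j) ^ 2) ≥
        κℓ * Real.sqrt (∑ i, ∑ j, (y i j - z i j) ^ 2))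
    (P : ℝ) (hP : 0 < P)
    (hb : ∀ w ∈ S,
      Real.sqrt (∑ i, ∑ j, ((B i).mulVec (r i (g i (w i))) j) ^ 2) ≥
        P * Real.sqrt (∑ i, ∑ j, (r i (g i (w i)) j) ^ 2))
    (κu : ℝ) (hκu : 0 < κu)
    (hc : ∀ y z : ∀ i : Fin nΩ, Fin (N i) → ℝ,
      Real.sqrt (∑ i, ∑ j,
          ((B i).mulVec (r i (y i)) j - (B i).mulVec (r i (z i)) j) ^ 2) ≤
        κu * Real.sqrt (∑ i, ∑ j, (y i j - z i j) ^ 2)) :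
    ∀ w ∈ S,
      Real.sqrt (∑ i, ∑ j, (xstar i j - g i (xhat i) j) ^ 2) ≤
        (κu / (P * κℓ)) *
          Real.sqrt (∑ i, ∑ j, (xstar i j - g i (w i) j) ^ 2) := by
  intro w hw
  have hBz : ∀ i, (B i).mulVec (r i (xstar i)) = 0 := by
    intro i; rw [hxstar i, Matrix.mulVec_zero]
  -- step 1: κℓ * LHS ≤ √Σ (r(g x̂))²
  have h1 : κℓ * Real.sqrt (∑ i, ∑ j, (xstar i j - g i (xhat i) j) ^ 2) ≤
      Real.sqrt (∑ i, ∑ j, (r i (g i (xhat i)) j) ^ 2) := by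
    have := ha xstar (fun i => g i (xhat i))
    have heq : (∑ i, ∑ j, (r i (xstar i) j - r i (g i (xhat i)) j) ^ 2) =
        ∑ i, ∑ j, (r i (g i (xhat i)) j) ^ 2 := by
      refine Finset.sum_congr rfl fun i _ => Finset.sum_congr rfl fun j _ => ?_
      rw [hxstar i]; simp
    rw [heq] at this; exact this
  -- step 2: P * √Σ (r(g x̂))² ≤ √Σ (B r(g x̂))²
  have h2 := hb xhat hxhat
  -- step 3: √Σ (B r(g x̂))² ≤ √Σ (B r(g w))²
  have h3 : Real.sqrt (∑ i, ∑ j, ((B i).mulVec (r i (g i (xhat i))) j) ^ 2) ≤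
      Real.sqrt (∑ i, ∑ j, ((B i).mulVec (r i (g i (w i))) j) ^ 2) :=
    Real.sqrt_le_sqrt (hmin w hw)
  -- step 4: √Σ (B r(g w))² ≤ κu * RHS
  have h4 : Real.sqrt (∑ i, ∑ j, ((B i).mulVec (r i (g i (w i))) j) ^ 2) ≤
      κu * Real.sqrt (∑ i, ∑ j, (xstar i j - g i (w i) j) ^ 2) := by
    have := hc (fun i => g i (w i)) xstar
    have heq1 : (∑ i, ∑ j, ((B i).mulVec (r i (g i (w i))) j
        - (B i).mulVec (r i (xstar i)) j) ^ 2) =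
        ∑ i, ∑ j, ((B i).mulVec (r i (g i (w i))) j) ^ 2 := by
      refine Finset.sum_congr rfl fun i _ => Finset.sum_congr rfl fun j _ => ?_
      rw [hBz i]; simp
    have heq2 : (∑ i, ∑ j, (g i (w i) j - xstar i j) ^ 2) =
        ∑ i, ∑ j, (xstar i j - g i (w i) j) ^ 2 := by
      refine Finset.sum_congr rfl fun i _ => Finset.sum_congr rfl fun j _ => ?_
      ring
    rw [heq1, heq2] at this; exact this
  have hPκ : 0 < P * κℓ := mul_pos hP hκℓ
  rw [div_mul_eq_mul_div, le_div_iff₀ hPκ]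
  calc Real.sqrt (∑ i, ∑ j, (xstar i j - g i (xhat i) j) ^ 2) * (P * κℓ)
      = P * (κℓ * Real.sqrt (∑ i, ∑ j, (xstar i j - g i (xhat i) j) ^ 2)) := by ring
    _ ≤ P * Real.sqrt (∑ i, ∑ j, (r i (g i (xhat i)) j) ^ 2) := by
        exact mul_le_mul_of_nonneg_left h1 hP.le
    _ ≤ Real.sqrt (∑ i, ∑ j, ((B i).mulVec (r i (g i (xhat i))) j) ^ 2) := h2
    _ ≤ Real.sqrt (∑ i, ∑ j, ((B i).mulVec (r i (g i (w i))) j) ^ 2) := h3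
    _ ≤ κu * Real.sqrt (∑ i, ∑ j, (xstar i j - g i (w i) j) ^ 2) := h4
end
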